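/- Let π(t) ∈ ℂ[t] be a polynomial of degree N with π(0) = 1. Then the set {t^r : 0 ≤ r < N} ∪ {t^m π(t) : m ∈ ℤ} is a ℂ-basis of the Laurent polynomial ring ℂ[t, t^{-1}]. -/

import Mathlib

open LaurentPolynomial Polynomial

private lemma aux_smul (a : ℂ) (n : ℤ) :
    LaurentPolynomial.C a * LaurentPolynomial.T n = a • LaurentPolynomial.T n := by
  rw [← LaurentPolynomial.single_eq_C_mul_T, LaurentPolynomial.T, AddMonoidAlgebra.smul_single,
    smul_eq_mul, mul_one]

private lemma aux_expand (π : Polynomial ℂ) (N : ℕ) (hdeg : π.natDegree = N) (m : ℤ) :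
    LaurentPolynomial.T m * Polynomial.toLaurent π
      = ∑ j ∈ Finset.range (N + 1), π.coeff j • LaurentPolynomial.T (m + j) := by
  conv_lhs => rw [Polynomial.as_sum_range' π (N + 1) (by omega)]
  rw [map_sum, Finset.mul_sum]
  refine Finset.sum_congr rfl fun j _ => ?_
  rw [← Polynomial.C_mul_X_pow_eq_monomial, Polynomial.toLaurent_C_mul_X_pow,
    mul_left_comm, ← LaurentPolynomial.T_add, aux_smul]

/-- If `π ∈ ℂ[t]` has degree `N` and `π(0) = 1`, then
`{t^r : 0 ≤ r < N} ∪ {t^m π(t) : m ∈ ℤ}` is a ℂ-basis of `ℂ[t, t⁻¹]`: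
the corresponding family (indexed by `Fin N ⊕ ℤ`) is linearly independent
and spans the Laurent polynomial ring. -/
theorem stmt_3 (N : ℕ) (π : Polynomial ℂ) (h0 : π.coeff 0 = 1) (hdeg : π.natDegree = N)
    (f : Fin N ⊕ ℤ → LaurentPolynomial ℂ)
    (hf1 : ∀ r : Fin N, f (Sum.inl r) = LaurentPolynomial.T (r : ℤ))
    (hf2 : ∀ m : ℤ, f (Sum.inr m) = LaurentPolynomial.T m * Polynomial.toLaurent π) :
    LinearIndependent ℂ f ∧ Submodule.span ℂ (Set.range f) = ⊤ := by
  have hπ0 : π ≠ 0 := fun h => by simp [h] at h0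
  have hcN : π.coeff N ≠ 0 := by
    rw [← hdeg]
    exact Polynomial.leadingCoeff_ne_zero.mpr hπ0
  have hπ'0 : Polynomial.toLaurent π ≠ 0 := Polynomial.toLaurent_ne_zero.mpr hπ0
  have hT : LinearIndependent ℂ fun n : ℤ => (LaurentPolynomial.T n : LaurentPolynomial ℂ) :=
    (AddMonoidAlgebra.basis ℤ ℂ).linearIndependent
  have hfe : f = Sum.elim (fun r : Fin N => LaurentPolynomial.T (r : ℤ))
      (fun m : ℤ => LaurentPolynomial.T m * Polynomial.toLaurent π) := by
    funext i
    cases i with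
    | inl r => simpa using hf1 r
    | inr m => simpa using hf2 m
  rw [hfe]
  constructor
  · rw [linearIndependent_sum]
    refine ⟨?_, ?_, ?_⟩
    · exact hT.comp (fun r : Fin N => (r : ℤ)) (fun a b hab => by simpa [Fin.val_inj] using hab)
    · have hinj : Function.Injective (LinearMap.mulRight ℂ (Polynomial.toLaurent π)) :=
        fun a b h => mul_right_cancel₀ hπ'0 h
      exact hT.map' (LinearMap.mulRight ℂ (Polynomial.toLaurent π))
        (LinearMap.ker_eq_bot.mpr hinj)
    · rw [Submodule.disjoint_def]
      intro x hxv hxw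
      have hw : Submodule.span ℂ
          (Set.range fun m : ℤ => LaurentPolynomial.T m * Polynomial.toLaurent π)
          ≤ LinearMap.range (LinearMap.mulRight ℂ (Polynomial.toLaurent π)) := by
        rw [Submodule.span_le]
        rintro _ ⟨m, rfl⟩
        exact ⟨LaurentPolynomial.T m, rfl⟩
      obtain ⟨q, hq⟩ := hw hxw
      have hv : Submodule.span ℂ (Set.range fun r : Fin N => LaurentPolynomial.T (r : ℤ))
          ≤ Submodule.map (Polynomial.toLaurentAlg (R := ℂ)).toLinearMap
            (Polynomial.degreeLT ℂ N) := by
        rw [Submodule.span_le]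
        rintro _ ⟨r, rfl⟩
        refine ⟨Polynomial.X ^ (r : ℕ), Polynomial.mem_degreeLT.mpr ?_, ?_⟩
        · rw [Polynomial.degree_X_pow]
          exact_mod_cast r.2
        · simp [Polynomial.toLaurentAlg_apply, Polynomial.toLaurent_X_pow]
      obtain ⟨P, hP, hPx⟩ := hv hxv
      replace hPx : Polynomial.toLaurent P = x := hPx
      obtain ⟨n, Q, hQ⟩ := LaurentPolynomial.exists_T_pow q
      have key : P * Polynomial.X ^ n = Q * π := by
        apply Polynomial.toLaurent_injective
        rw [map_mul, map_mul, Polynomial.toLaurent_X_pow, hQ, hPx, ← hq]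
        show q * Polynomial.toLaurent π * LaurentPolynomial.T n
          = q * LaurentPolynomial.T n * Polynomial.toLaurent π
        ring
      have hXpi : ¬ (Polynomial.X ∣ π) := by
        rw [Polynomial.X_dvd_iff, h0]
        exact one_ne_zero
      have hdvd : Polynomial.X ^ n ∣ Q :=
        (Polynomial.prime_X).pow_dvd_of_dvd_mul_right n hXpi ⟨P, by rw [← key]; ring⟩
      obtain ⟨Q', hQ'⟩ := hdvd
      have hXn : (Polynomial.X : Polynomial ℂ) ^ n ≠ 0 := pow_ne_zero _ Polynomial.X_ne_zero
      have hPQ : P = Q' * π := by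
        apply mul_right_cancel₀ hXn
        rw [key, hQ']
        ring
      have hQ'0 : Q' = 0 := by
        by_contra h
        have hd := Polynomial.mem_degreeLT.mp hP
        rw [hPQ, Polynomial.degree_mul, Polynomial.degree_eq_natDegree hπ0, hdeg] at hd
        have h0d : (0 : WithBot ℕ) ≤ Q'.degree := Polynomial.zero_le_degree_iff.mpr h
        exact absurd (lt_of_le_of_lt (by simpa using add_le_add_left h0d (N : WithBot ℕ)) hd)
          (lt_irrefl _)
      have hP0 : P = 0 := by rw [hPQ, hQ'0, zero_mul]
      rw [← hPx, hP0, map_zero]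
  · set S := Submodule.span ℂ (Set.range (Sum.elim
      (fun r : Fin N => LaurentPolynomial.T (r : ℤ))
      (fun m : ℤ => LaurentPolynomial.T m * Polynomial.toLaurent π))) with hS
    have hmemv : ∀ r : Fin N, LaurentPolynomial.T ((r : ℕ) : ℤ) ∈ S :=
      fun r => Submodule.subset_span ⟨Sum.inl r, rfl⟩
    have key : ∀ m : ℤ,
        (∑ j ∈ Finset.range (N + 1), π.coeff j • LaurentPolynomial.T (m + j)) ∈ S := by
      intro m
      rw [← aux_expand π N hdeg m]
      exact Submodule.subset_span ⟨Sum.inr m, rfl⟩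
    have hup : ∀ k : ℕ, LaurentPolynomial.T (k : ℤ) ∈ S := by
      intro k
      induction k using Nat.strong_induction_on with
      | _ k ih =>
        by_cases hk : k < N
        · exact hmemv ⟨k, hk⟩
        · push_neg at hk
          have hsum := key ((k : ℤ) - N)
          rw [Finset.sum_range_succ] at hsum
          have hrest : (∑ j ∈ Finset.range N,
              π.coeff j • LaurentPolynomial.T ((k : ℤ) - N + j)) ∈ S := by
            refine Submodule.sum_mem _ fun j hj => ?_
            have hj' := Finset.mem_range.mp hj
            have e2 : (k : ℤ) - N + j = ((k - N + j : ℕ) : ℤ) := by push_cast; omega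
            rw [e2]
            exact Submodule.smul_mem _ _ (ih (k - N + j) (by omega))
          have hTk := Submodule.sub_mem S hsum hrest
          rw [add_sub_cancel_left] at hTk
          have e1 : (k : ℤ) - N + N = (k : ℤ) := by ring
          rw [e1] at hTk
          have := Submodule.smul_mem S (π.coeff N)⁻¹ hTk
          rwa [smul_smul, inv_mul_cancel₀ hcN, one_smul] at this
    have hdown : ∀ k : ℕ, ∀ n : ℤ, -(k : ℤ) ≤ n → LaurentPolynomial.T n ∈ S := by
      intro k
      induction k with
      | zero =>
        intro n hn
        lift n to ℕ using (by omega)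
        exact hup n
      | succ k ih =>
        intro n hn
        by_cases h : -(k : ℤ) ≤ n
        · exact ih n h
        · push_neg at h
          have hsum := key n
          rw [Finset.sum_range_succ'] at hsum
          have hrest : (∑ j ∈ Finset.range N,
              π.coeff (j + 1) • LaurentPolynomial.T (n + ((j : ℕ) + 1 : ℕ))) ∈ S := by
            refine Submodule.sum_mem _ fun j hj => ?_
            exact Submodule.smul_mem _ _ (ih (n + ((j : ℕ) + 1 : ℕ)) (by push_cast; omega))
          have hTn := Submodule.sub_mem S hsum hrest
          rw [add_sub_cancel_left] at hTn
          simpa [h0] using hTn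
    rw [eq_top_iff]
    rintro x -
    induction x using LaurentPolynomial.induction_on' with
    | add p q hp hq => exact Submodule.add_mem S hp hq
    | C_mul_T n a =>
      rw [aux_smul]
      exact Submodule.smul_mem S a (hdown n.natAbs n (by omega))
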